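/- In Γ_p = T^{p-1} ⋊_ρ C_p, the normaliser of the subgroup C_p = ⟨a⟩ equals the internal direct product Z(Γ_p) × C_p, where Z(Γ_p) is the centre of Γ_p. -/

import Mathlib

/-- In `Γ_p = T^{p-1} ⋊_ρ C_p` (the generator `a` of
`C_p = Multiplicative (ZMod p)` acting on `T^{p-1} = Fin (p-1) → Circle` by
`ρ(a)(t_1, …, t_{p-1}) = (t_{p-1}⁻¹, t_1 t_{p-1}⁻¹, …, t_{p-2} t_{p-1}⁻¹)`),
the normaliser of the subgroup `C_p = ⟨a⟩` is the internal direct product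
`Z(Γ_p) × C_p`: it equals `Z(Γ_p) ⊔ ⟨a⟩` and `Z(Γ_p) ⊓ ⟨a⟩ = ⊥` (the two factors
commute automatically since one of them is the centre). -/
theorem stmt_5 (p : ℕ) (hp : p.Prime)
    (φ : Multiplicative (ZMod p) →* MulAut (Fin (p - 1) → Circle))
    (hφ : ∀ (t : Fin (p - 1) → Circle) (i : Fin (p - 1)),
      φ (Multiplicative.ofAdd (1 : ZMod p)) t i =
        if (i : ℕ) = 0 then (t ⟨p - 2, by have := i.isLt; omega⟩)⁻¹
        else t ⟨(i : ℕ) - 1, by have := i.isLt; omega⟩ * (t ⟨p - 2, by have := i.isLt; omega⟩)⁻¹)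
    (Cp : Subgroup (SemidirectProduct (Fin (p - 1) → Circle) (Multiplicative (ZMod p)) φ))
    (hCp : Cp = Subgroup.zpowers (⟨1, Multiplicative.ofAdd (1 : ZMod p)⟩ :
      SemidirectProduct (Fin (p - 1) → Circle) (Multiplicative (ZMod p)) φ)) :
    Subgroup.normalizer (Cp : Set (SemidirectProduct (Fin (p - 1) → Circle) (Multiplicative (ZMod p)) φ)) =
      Subgroup.center (SemidirectProduct (Fin (p - 1) → Circle) (Multiplicative (ZMod p)) φ) ⊔ Cp
    ∧ Subgroup.center (SemidirectProduct (Fin (p - 1) → Circle) (Multiplicative (ZMod p)) φ) ⊓ Cp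
        = ⊥ := by
  haveI : Fact p.Prime := ⟨hp⟩
  have hp2 : 2 ≤ p := hp.two_le
  set a : Multiplicative (ZMod p) := Multiplicative.ofAdd (1 : ZMod p) with ha
  -- φ a is not the identity
  have hφa_ne : φ a ≠ 1 := by
    intro h
    set z : Circle := ⟨Complex.I, by simp [Submonoid.unitSphere]⟩ with hz
    have h0 : (0 : ℕ) < p - 1 := by omega
    have h1 := hφ (fun _ => z) ⟨0, h0⟩
    rw [h] at h1
    have h2 : z = z⁻¹ := by simpa using h1
    have hc := congrArg (fun w : Circle => (w : ℂ)) h2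
    simp only [Circle.coe_inv] at hc
    simp only [hz, Complex.inv_I] at hc
    have := congrArg Complex.im hc
    simp at this
    norm_num at this
  -- faithfulness
  have hfaith : ∀ b : Multiplicative (ZMod p), φ b = 1 → b = 1 := by
    intro b hb
    by_contra hb1
    apply hφa_ne
    have hb0 : (Multiplicative.toAdd b) ≠ 0 := by
      intro h
      exact hb1 (by rw [← ofAdd_toAdd b, h, ofAdd_zero])
    have h1 : (((Multiplicative.toAdd b)⁻¹.val : ℕ) : ZMod p) = (Multiplicative.toAdd b)⁻¹ :=
      ZMod.natCast_rightInverse _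
    have key : a = b ^ ((Multiplicative.toAdd b)⁻¹.val) := by
      apply Multiplicative.toAdd.injective
      rw [toAdd_pow, ha, toAdd_ofAdd, nsmul_eq_mul, h1, inv_mul_cancel₀ hb0]
    rw [key, map_pow, hb, one_pow]
  -- every element of Multiplicative (ZMod p) is a power of a
  have hgen : ∀ c : Multiplicative (ZMod p), ∃ n : ℕ, c = a ^ n := by
    intro c
    refine ⟨(Multiplicative.toAdd c).val, ?_⟩
    have h1 : (((Multiplicative.toAdd c).val : ℕ) : ZMod p) = Multiplicative.toAdd c :=
      ZMod.natCast_rightInverse _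
    apply Multiplicative.toAdd.injective
    rw [toAdd_pow, ha, toAdd_ofAdd, nsmul_eq_mul, mul_one, h1]
  -- fixed points of φ a are fixed by all φ c
  have hfix : ∀ (t : Fin (p - 1) → Circle), φ a t = t → ∀ c, φ c t = t := by
    intro t ht c
    obtain ⟨n, rfl⟩ := hgen c
    rw [map_pow]
    induction n with
    | zero => simp
    | succ n ih => rw [pow_succ, MulAut.mul_apply, ht, ih]
  -- Cp membership
  have hg : (⟨1, a⟩ : SemidirectProduct (Fin (p - 1) → Circle) (Multiplicative (ZMod p)) φ) = SemidirectProduct.inr a := rfl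
  have hCpmem : ∀ x : SemidirectProduct (Fin (p - 1) → Circle) (Multiplicative (ZMod p)) φ, x ∈ Cp ↔ x.left = 1 := by
    intro x
    rw [hCp, Subgroup.mem_zpowers_iff]
    constructor
    · rintro ⟨k, rfl⟩
      rw [hg, ← map_zpow]
      exact SemidirectProduct.left_inr _
    · intro hx
      obtain ⟨n, hn⟩ := hgen x.right
      refine ⟨(n : ℤ), ?_⟩
      rw [hg, zpow_natCast, ← map_pow, ← hn]
      conv_rhs => rw [← SemidirectProduct.inl_left_mul_inr_right x]
      rw [hx, map_one, one_mul]
  -- center membership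
  have hCen : ∀ x : SemidirectProduct (Fin (p - 1) → Circle) (Multiplicative (ZMod p)) φ, x ∈ Subgroup.center (SemidirectProduct (Fin (p - 1) → Circle) (Multiplicative (ZMod p)) φ) ↔ (x.right = 1 ∧ φ a x.left = x.left) := by
    intro x
    rw [Subgroup.mem_center_iff]
    constructor
    · intro h
      constructor
      · apply hfaith
        apply MulEquiv.ext
        intro s
        have hcomm := congrArg SemidirectProduct.left (h (SemidirectProduct.inl s))
        simp only [SemidirectProduct.mul_left, SemidirectProduct.left_inl,
          SemidirectProduct.right_inl, map_one, MulAut.one_apply] at hcomm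
        -- hcomm : s * x.left = x.left * φ x.right s
        have h2 : φ x.right s = s :=
          mul_left_cancel (a := x.left) (by rw [← hcomm, mul_comm])
        simpa using h2
      · have hcomm := congrArg SemidirectProduct.left (h (SemidirectProduct.inr a))
        simp only [SemidirectProduct.mul_left, SemidirectProduct.left_inr,
          SemidirectProduct.right_inr, map_one, MulAut.one_apply, mul_one, one_mul] at hcomm
        exact hcomm
    · rintro ⟨h1, h2⟩ y
      have hfx := hfix x.left h2
      ext
      · simp only [SemidirectProduct.mul_left, h1, map_one, MulAut.one_apply, hfx y.right]
        exact mul_comm _ _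
      · simp only [SemidirectProduct.mul_right]
        exact congrArg _ (mul_comm _ _)
  -- normalizer membership
  have hNorm : ∀ x : SemidirectProduct (Fin (p - 1) → Circle) (Multiplicative (ZMod p)) φ, x ∈ Subgroup.normalizer (Cp : Set (SemidirectProduct (Fin (p - 1) → Circle) (Multiplicative (ZMod p)) φ)) ↔ φ a x.left = x.left := by
    intro x
    rw [Subgroup.mem_normalizer_iff]
    have hconj : ∀ h : SemidirectProduct (Fin (p - 1) → Circle) (Multiplicative (ZMod p)) φ, (x * h * x⁻¹).left
        = x.left * φ x.right h.left * φ h.right x.left⁻¹ := by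
      intro h
      simp only [SemidirectProduct.mul_left, SemidirectProduct.mul_right,
        SemidirectProduct.inv_left, SemidirectProduct.inv_right]
      have hcomm : x.right * h.right * x.right⁻¹ = h.right := by
        rw [mul_comm x.right h.right, mul_inv_cancel_right]
      conv_rhs => rw [← hcomm]
      simp only [map_mul, MulAut.mul_apply, map_inv]
    constructor
    · intro h
      have h1 := (h (SemidirectProduct.inr a)).mp ((hCpmem _).mpr rfl)
      rw [hCpmem, hconj] at h1
      simp only [SemidirectProduct.left_inr, SemidirectProduct.right_inr, map_one,
        MulAut.one_apply, mul_one] at h1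
      rw [map_inv] at h1
      exact (mul_inv_eq_one.mp h1).symm
    · intro hx h
      rw [hCpmem, hCpmem, hconj]
      have hfx := hfix x.left hx
      rw [map_inv, hfx h.right]
      rw [mul_comm x.left (φ x.right h.left), mul_assoc, mul_inv_cancel, mul_one]
      constructor
      · intro h'; rw [h', map_one]
      · intro h'
        exact (φ x.right).injective (a₁ := h.left) (a₂ := 1) (by rw [h', map_one])
  constructor
  · apply le_antisymm
    · intro x hx
      rw [hNorm] at hx
      have hx1 : SemidirectProduct.inl x.left ∈ Subgroup.center (SemidirectProduct (Fin (p - 1) → Circle) (Multiplicative (ZMod p)) φ) :=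
        (hCen _).mpr ⟨SemidirectProduct.right_inl _, by
          rw [SemidirectProduct.left_inl]; exact hx⟩
      have hx2 : SemidirectProduct.inr x.right ∈ Cp :=
        (hCpmem _).mpr (SemidirectProduct.left_inr _)
      rw [← SemidirectProduct.inl_left_mul_inr_right x]
      exact Subgroup.mul_mem _ (Subgroup.mem_sup_left hx1) (Subgroup.mem_sup_right hx2)
    · apply sup_le
      · intro x hx
        rw [hNorm]
        exact ((hCen x).mp hx).2
      · intro x hx
        rw [hNorm]
        rw [hCpmem] at hx
        rw [hx, map_one]
  · rw [eq_bot_iff]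
    intro x hx
    obtain ⟨hc, hcp⟩ := Subgroup.mem_inf.mp hx
    rw [Subgroup.mem_bot]
    rw [hCpmem] at hcp
    have hr := ((hCen x).mp hc).1
    ext
    · rw [hcp]; rfl
    · rw [hr]; rfl
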